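/- Let A ⊆ B be an extension of Noetherian integral domains such that B is finitely generated as an A-module. Call an A-lattice in B any A-submodule of B of the form Σᵢ A·bᵢ, where b₁,…,b_d ∈ B form a basis of Frac(B) as a Frac(A)-vector space. Then: (1) every A-lattice in B contains a non-zero ideal of B; (2) conversely, every non-zero ideal of B contains an A-lattice in B. -/

import Mathlib

open Polynomial in
lemma aux_dvd {A B : Type*} [CommRing A] [CommRing B] [IsDomain B] [Algebra A B]
    {q : B} (hq : q ≠ 0) (hi : IsIntegral A q) :
    ∃ a : A, a ≠ 0 ∧ ∃ r : B, q * r = algebraMap A B a := by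
  obtain ⟨p, hm, hp⟩ := hi
  suffices H : ∀ n (p : Polynomial A), p.Monic →
      Polynomial.eval₂ (algebraMap A B) q p = 0 → p.natDegree = n →
      ∃ a : A, a ≠ 0 ∧ ∃ r : B, q * r = algebraMap A B a from H _ p hm hp rfl
  intro n
  induction n using Nat.strong_induction_on with
  | _ n ih =>
    intro p hm hp hdeg
    have e : Polynomial.eval₂ (algebraMap A B) q p.divX * q + algebraMap A B (p.coeff 0) = 0 := by
      rw [← hp]
      conv_rhs => rw [← p.divX_mul_X_add]
      simp [Polynomial.eval₂_add, Polynomial.eval₂_mul]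
    by_cases h0 : p.coeff 0 = 0
    · have hn0 : p.natDegree ≠ 0 := by
        intro h
        rw [hm.natDegree_eq_zero] at h
        rw [h] at hp
        simp at hp
      have hge1 : 1 ≤ p.natDegree := Nat.one_le_iff_ne_zero.mpr hn0
      have hdX : p.divX.Monic := by
        unfold Polynomial.Monic
        rw [Polynomial.leadingCoeff, Polynomial.natDegree_divX_eq_natDegree_tsub_one,
          Polynomial.coeff_divX, Nat.sub_add_cancel hge1]
        exact hm
      have hpz : Polynomial.eval₂ (algebraMap A B) q p.divX = 0 := by
        rw [h0, map_zero, add_zero] at e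
        exact (mul_eq_zero.mp e).resolve_right hq
      exact ih p.divX.natDegree (by
        rw [Polynomial.natDegree_divX_eq_natDegree_tsub_one, hdeg]
        omega) p.divX hdX hpz rfl
    · refine ⟨p.coeff 0, h0, -(Polynomial.eval₂ (algebraMap A B) q p.divX), ?_⟩
      rw [mul_neg, mul_comm, neg_eq_iff_add_eq_zero.mpr e]

theorem lattice_ideal {A B : Type*} [CommRing A] [CommRing B] [IsDomain A] [IsDomain B]
    [IsNoetherianRing A] [IsNoetherianRing B] [Algebra A B]
    (hinj : Function.Injective (algebraMap A B)) [Module.Finite A B]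
    (K L : Type*) [Field K] [Field L] [Algebra A K] [IsFractionRing A K]
    [Algebra B L] [IsFractionRing B L] [Algebra A L] [Algebra K L]
    [IsScalarTower A B L] [IsScalarTower A K L] :
    (∀ (d : ℕ) (b : Fin d → B) (v : Module.Basis (Fin d) K L),
        (∀ i, v i = algebraMap B L (b i)) →
        ∃ I : Ideal B, I ≠ ⊥ ∧ (I : Set B) ⊆ (Submodule.span A (Set.range b) : Set B)) ∧
      ∀ I : Ideal B, I ≠ ⊥ →
        ∃ (d : ℕ) (b : Fin d → B) (v : Module.Basis (Fin d) K L),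
          (∀ i, v i = algebraMap B L (b i)) ∧
          (Submodule.span A (Set.range b) : Set B) ⊆ (I : Set B) := by
  have hinjBL : Function.Injective (algebraMap B L) := IsFractionRing.injective B L
  have hinjAK : Function.Injective (algebraMap A K) := IsFractionRing.injective A K
  obtain ⟨n, x, hx⟩ := Module.Finite.exists_fin (R := A) (M := B)
  have F : B →ₗ[A] L := (IsScalarTower.toAlgHom A B L).toLinearMap
  haveI : Algebra.IsIntegral A B := Algebra.IsIntegral.of_finite A B
  constructor
  · -- Part 1
    intro d b v hv
    obtain ⟨a, ha⟩ := IsLocalization.exist_integer_multiples (nonZeroDivisors A)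
      (Finset.univ : Finset (Fin n × Fin d)) (fun p => v.repr (algebraMap B L (x p.1)) p.2)
    simp only [IsLocalization.IsInteger, RingHom.mem_range] at ha
    choose c hc using fun (p : Fin n × Fin d) => ha p (Finset.mem_univ p)
    have key : ∀ j, (a : A) • x j ∈ Submodule.span A (Set.range b) := by
      intro j
      have heq : (a : A) • x j = ∑ i, c (j, i) • b i := by
        apply hinjBL
        have h1 : algebraMap B L ((a : A) • x j) = (a : A) • algebraMap B L (x j) := by
          rw [Algebra.smul_def, Algebra.smul_def, map_mul,
            ← IsScalarTower.algebraMap_apply A B L]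
        have h2 : algebraMap B L (∑ i, c (j, i) • b i)
            = ∑ i, algebraMap A K (c (j, i)) • algebraMap B L (b i) := by
          rw [map_sum]
          refine Finset.sum_congr rfl fun i _ => ?_
          rw [Algebra.smul_def, map_mul, ← IsScalarTower.algebraMap_apply A B L,
            Algebra.smul_def, ← IsScalarTower.algebraMap_apply A K L]
        rw [h1, h2]
        conv_lhs => rw [← Module.Basis.sum_repr v (algebraMap B L (x j))]
        rw [Finset.smul_sum]
        refine Finset.sum_congr rfl fun i _ => ?_
        rw [hc (j, i), hv i, smul_assoc]
      rw [heq]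
      exact Submodule.sum_mem _ fun i _ =>
        Submodule.smul_mem _ _ (Submodule.subset_span ⟨i, rfl⟩)
    refine ⟨Ideal.span {algebraMap A B (a : A)}, ?_, ?_⟩
    · rw [Ne, Ideal.span_singleton_eq_bot]
      intro h
      exact nonZeroDivisors.ne_zero a.2 (hinj (by rw [h, map_zero]))
    · intro z hz
      rw [SetLike.mem_coe, Ideal.mem_span_singleton] at hz
      obtain ⟨u, rfl⟩ := hz
      have hmain : ∀ w ∈ Submodule.span A (Set.range x),
          (a : A) • w ∈ Submodule.span A (Set.range b) := by
        intro w hw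
        induction hw using Submodule.span_induction with
        | mem y hy => obtain ⟨j, rfl⟩ := hy; exact key j
        | zero => simp
        | add y z _ _ hy hz => rw [smul_add]; exact Submodule.add_mem _ hy hz
        | smul r y _ hy => rw [smul_comm]; exact Submodule.smul_mem _ _ hy
      have := hmain u (hx ▸ Submodule.mem_top)
      rwa [Algebra.smul_def] at this
  · -- Part 2
    intro I hI
    -- every nonzero q : B divides a nonzero constant
    have hdvd : ∀ q : B, q ≠ 0 → ∃ a : A, a ≠ 0 ∧ ∃ r : B, q * r = algebraMap A B a :=
      fun q hq => aux_dvd hq (Algebra.IsIntegral.isIntegral q)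
    -- L is spanned over K by the image of B
    have hspan : Submodule.span K (algebraMap B L '' Set.range x) = ⊤ := by
      rw [eq_top_iff]
      rintro z -
      obtain ⟨p, q, hq, rfl⟩ := IsFractionRing.div_surjective (A := B) z
      have hq0 : q ≠ 0 := nonZeroDivisors.ne_zero hq
      obtain ⟨a, ha0, r, hr⟩ := hdvd q hq0
      have hfq : algebraMap B L q ≠ 0 := fun h => hq0 (hinjBL (by simpa using h))
      have hK0 : algebraMap A K a ≠ 0 := fun h => ha0 (hinjAK (by simpa using h))
      have hBa : algebraMap A B a ≠ 0 := fun h => ha0 (hinj (by simpa using h))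
      have hr0 : r ≠ 0 := fun h => hBa (by rw [← hr, h, mul_zero])
      have hfr : algebraMap B L r ≠ 0 := fun h => hr0 (hinjBL (by simpa using h))
      have hzeq : algebraMap B L p / algebraMap B L q
          = (algebraMap A K a)⁻¹ • algebraMap B L (p * r) := by
        rw [Algebra.smul_def, map_inv₀, ← IsScalarTower.algebraMap_apply A K L,
          IsScalarTower.algebraMap_apply A B L, ← hr, map_mul, map_mul]
        field_simp
      rw [hzeq]
      refine Submodule.smul_mem _ _ ?_
      have hmem : p * r ∈ Submodule.span A (Set.range x) := hx ▸ Submodule.mem_top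
      have himg : algebraMap B L (p * r) ∈
          Submodule.map ((IsScalarTower.toAlgHom A B L).toLinearMap)
            (Submodule.span A (Set.range x)) := ⟨p * r, hmem, rfl⟩
      rw [Submodule.map_span] at himg
      have hle := Submodule.span_le_restrictScalars A K
        ((IsScalarTower.toAlgHom A B L).toLinearMap '' Set.range x)
      have := hle himg
      rwa [Submodule.restrictScalars_mem] at this
    haveI : Module.Finite K L := by
      rw [Module.finite_def, Submodule.fg_def]
      exact ⟨_, (Set.finite_range x).image _, hspan⟩
    set d := Module.finrank K L with hd
    set w : Module.Basis (Fin d) K L := Module.finBasis K L with hw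
    -- write each basis vector as p i / q i, clear denominators
    have hrep : ∀ i : Fin d, ∃ pi : B, ∃ ai : A, ai ≠ 0 ∧ ∃ ri : B,
        (algebraMap A K ai) • w i = algebraMap B L (pi * ri) := by
      intro i
      obtain ⟨p, q, hq, hpq⟩ := IsFractionRing.div_surjective (A := B) (w i)
      have hq0 : q ≠ 0 := nonZeroDivisors.ne_zero hq
      obtain ⟨a, ha0, r, hr⟩ := hdvd q hq0
      have hfq : algebraMap B L q ≠ 0 := fun h => hq0 (hinjBL (by simpa using h))
      refine ⟨p, a, ha0, r, ?_⟩
      rw [← hpq, Algebra.smul_def, ← IsScalarTower.algebraMap_apply A K L,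
        IsScalarTower.algebraMap_apply A B L, ← hr, map_mul, map_mul]
      field_simp
    choose pp aa ha0 rr hpr using hrep
    obtain ⟨y, hyI, hy0⟩ := Submodule.exists_mem_ne_zero_of_ne_bot hI
    have hfy : algebraMap B L y ≠ 0 := fun h => hy0 (hinjBL (by simpa using h))
    have hcu : ∀ i : Fin d, IsUnit (algebraMap A K (aa i)) := fun i =>
      IsUnit.mk0 _ (fun h => ha0 i (hinjAK (by simpa using h)))
    -- multiplication by (algebraMap B L y) as a K-linear equivalence
    let e : L ≃ₗ[K] L := LinearEquiv.ofBijective (LinearMap.mulLeft K (algebraMap B L y))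
      ⟨fun s t hst => mul_left_cancel₀ hfy hst,
       fun s => ⟨s / algebraMap B L y, by
         simp [LinearMap.mulLeft_apply, mul_div_cancel₀, hfy]⟩⟩
    refine ⟨d, fun i => y * (pp i * rr i), (w.isUnitSMul hcu).map e, fun i => ?_, ?_⟩
    · rw [Module.Basis.map_apply, Module.Basis.isUnitSMul_apply]
      show algebraMap B L y * (algebraMap A K (aa i) • w i) = _
      rw [hpr i, ← map_mul]
    · intro z hz
      have hle : Submodule.span A (Set.range fun i => y * (pp i * rr i))
          ≤ Submodule.restrictScalars A (I : Submodule B B) := by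
        rw [Submodule.span_le]
        rintro _ ⟨i, rfl⟩
        exact I.mul_mem_right _ hyI
      exact hle hz
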